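/- Let d ≥ 2 and let a ∈ ℝ^d have all coordinates strictly positive. Let B = { x ∈ 𝕋^d : x ≠ ∞ and x_i = ∞ for at least one i } be the boundary of 𝕋^d ∖ {∞}; B is invariant under translation by a. Then the quotient B/ℤ (by the action n·x = x + n·a), which is the boundary ∂S of the diagonal tropical Hopf manifold S = (𝕋^d ∖ {∞})/ℤ, is homeomorphic to S¹ × S^{d−2}, the product of the circle with the (d−2)-dimensional sphere. (This claim is used in the paper's computation of H_{d,q} of diagonal tropical Hopf manifolds.) -/

import Mathlib

/-- The tropical affine space `𝕋 = ℝ ∪ {∞}` is `WithTop ℝ`, with the order topology. -/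
noncomputable instance : TopologicalSpace (WithTop ℝ) := Preorder.topology _
instance : OrderTopology (WithTop ℝ) := ⟨rfl⟩

open Real Set

namespace TropAux

/-! ### The exponential chart on the tropical line -/

noncomputable def tropE (c : ℝ) (x : WithTop ℝ) : ℝ :=
  WithTop.recTopCoe 0 (fun t => Real.exp (-(c * t))) x

@[simp] lemma tropE_top (c : ℝ) : tropE c ⊤ = 0 := rfl
@[simp] lemma tropE_coe (c t : ℝ) : tropE c (t : ℝ) = Real.exp (-(c * t)) := rfl

lemma tropE_nonneg (c : ℝ) (x : WithTop ℝ) : 0 ≤ tropE c x := by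
  induction x using WithTop.recTopCoe with
  | top => simp
  | coe t => exact (Real.exp_pos _).le

lemma tropE_eq_zero_iff (c : ℝ) (x : WithTop ℝ) : tropE c x = 0 ↔ x = ⊤ := by
  induction x using WithTop.recTopCoe with
  | top => simp
  | coe t => simp [Real.exp_ne_zero, WithTop.coe_ne_top]

lemma tropE_pos (c : ℝ) {x : WithTop ℝ} (hx : x ≠ ⊤) : 0 < tropE c x :=
  (tropE_nonneg c x).lt_of_ne (fun h => hx ((tropE_eq_zero_iff c x).1 h.symm))

noncomputable def tropF (c : ℝ) (x : WithTop ℝ) : Iic (0:ℝ) :=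
  ⟨-(tropE c x), by simpa using tropE_nonneg c x⟩

lemma tropF_strictMono {c : ℝ} (hc : 0 < c) : StrictMono (tropF c) := by
  intro x y hxy
  simp only [tropF, Subtype.mk_lt_mk, neg_lt_neg_iff]
  induction y using WithTop.recTopCoe with
  | top =>
      obtain ⟨t, rfl⟩ := WithTop.ne_top_iff_exists.1 hxy.ne
      simpa using Real.exp_pos _
  | coe s =>
      induction x using WithTop.recTopCoe with
      | top => exact absurd hxy (not_top_lt)
      | coe t =>
          rw [tropE_coe, tropE_coe, Real.exp_lt_exp, neg_lt_neg_iff]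
          exact mul_lt_mul_of_pos_left (WithTop.coe_lt_coe.1 hxy) hc

lemma tropF_surjective {c : ℝ} (hc : 0 < c) : Function.Surjective (tropF c) := by
  rintro ⟨y, hy⟩
  have hy' : y ≤ 0 := hy
  rcases eq_or_lt_of_le hy' with h0 | h0
  · exact ⟨⊤, Subtype.ext (by simp [tropF, h0])⟩
  · refine ⟨((-(Real.log (-y)) / c : ℝ) : WithTop ℝ), Subtype.ext ?_⟩
    have hny : 0 < -y := neg_pos.2 h0
    show -(tropE c _) = y
    rw [tropE_coe, mul_div_cancel₀ _ hc.ne', neg_neg, Real.exp_log hny, neg_neg]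

noncomputable def tropIso {c : ℝ} (hc : 0 < c) : WithTop ℝ ≃o Iic (0:ℝ) :=
  StrictMono.orderIsoOfSurjective _ (tropF_strictMono hc) (tropF_surjective hc)

lemma tropIso_apply {c : ℝ} (hc : 0 < c) (x : WithTop ℝ) :
    ((tropIso hc x : ℝ)) = -(tropE c x) := rfl

lemma tropE_continuous {c : ℝ} (hc : 0 < c) : Continuous (tropE c) := by
  have h : Continuous fun x => -((tropIso hc x : ℝ)) :=
    (continuous_subtype_val.comp (tropIso hc).continuous).neg
  simpa [tropIso_apply hc] using h

lemma tropE_injective {c : ℝ} (hc : 0 < c) : Function.Injective (tropE c) := by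
  intro x y h
  have : tropF c x = tropF c y := Subtype.ext (by simp [tropF, h])
  exact (tropF_strictMono hc).injective this

lemma tropE_add (c : ℝ) (x : WithTop ℝ) (s : ℝ) :
    tropE c (x + (s : WithTop ℝ)) = Real.exp (-(c * s)) * tropE c x := by
  induction x using WithTop.recTopCoe with
  | top => simp
  | coe t =>
      rw [← WithTop.coe_add, tropE_coe, tropE_coe, ← Real.exp_add]
      ring_nf

lemma isCompact_Ici_trop (r : ℝ) : IsCompact (Ici ((r : ℝ) : WithTop ℝ)) := by
  have e := tropIso one_pos
  have himg : (fun x => e x) '' (Ici ((r:ℝ) : WithTop ℝ)) = Ici (e (r:ℝ)) := by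
    ext y
    constructor
    · rintro ⟨x, hx, rfl⟩; exact e.monotone hx
    · intro hy
      refine ⟨e.symm y, ?_, e.apply_symm_apply y⟩
      have := e.symm.monotone hy
      rwa [e.symm_apply_apply] at this
  have h2 : IsCompact (Ici (e (r:ℝ)) : Set (Iic (0:ℝ))) := by
    rw [Subtype.isCompact_iff]
    have himg2 : (Subtype.val '' (Ici (e (r:ℝ)) : Set (Iic (0:ℝ)))) = Icc ((e (r:ℝ) : ℝ)) 0 := by
      ext y
      simp only [mem_image, mem_Icc]
      constructor
      · rintro ⟨⟨y, hy0⟩, hy, rfl⟩; exact ⟨hy, hy0⟩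
      · rintro ⟨h1, h2⟩; exact ⟨⟨y, h2⟩, h1, rfl⟩
    rw [himg2]
    exact isCompact_Icc
  have h3 : IsCompact (⇑e.toHomeomorph '' Ici ((r:ℝ) : WithTop ℝ)) := by
    rw [show ⇑e.toHomeomorph = fun x => e x from rfl, himg]; exact h2
  exact (e.toHomeomorph.isCompact_image).1 h3

/-! ### The sum functional and the hyperplane isometry -/

noncomputable def sumL (d : ℕ) : EuclideanSpace ℝ (Fin d) →ₗ[ℝ] ℝ where
  toFun v := ∑ i, v i
  map_add' v w := by simp [Finset.sum_add_distrib]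
  map_smul' r v := by simp [Finset.mul_sum]

@[simp] lemma sumL_apply {d : ℕ} (v : EuclideanSpace ℝ (Fin d)) : sumL d v = ∑ i, v i := rfl

lemma sumL_surjective {d : ℕ} (hd : 0 < d) : Function.Surjective (sumL d) := by
  intro t
  haveI : Nonempty (Fin d) := ⟨⟨0, hd⟩⟩
  refine ⟨(WithLp.equiv 2 _).symm (fun _ => t / d), ?_⟩
  have hd' : (d : ℝ) ≠ 0 := Nat.cast_ne_zero.2 hd.ne'
  simp only [sumL_apply]
  have h : ∀ i : Fin d, ((WithLp.equiv 2 (Fin d → ℝ)).symm (fun _ => t / d)) i = t / d :=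
    fun i => rfl
  rw [Finset.sum_congr rfl (fun i _ => h i), Finset.sum_const, Finset.card_univ,
    Fintype.card_fin, nsmul_eq_mul]
  field_simp

lemma finrank_ker_sumL {d : ℕ} (hd : 0 < d) :
    Module.finrank ℝ (LinearMap.ker (sumL d)) = d - 1 := by
  have h1 := (sumL d).finrank_range_add_finrank_ker
  rw [LinearMap.range_eq_top.2 (sumL_surjective hd), finrank_top,
    finrank_euclideanSpace_fin] at h1
  have h2 : Module.finrank ℝ ℝ = 1 := Module.finrank_self ℝ
  omega

noncomputable def hplaneIso (d : ℕ) (hd : 0 < d) :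
    LinearMap.ker (sumL d) ≃ₗᵢ[ℝ] EuclideanSpace ℝ (Fin (d - 1)) :=
  (stdOrthonormalBasis ℝ (LinearMap.ker (sumL d))).repr.trans
    (LinearIsometryEquiv.piLpCongrLeft 2 ℝ ℝ (finCongr (finrank_ker_sumL hd)))

/-! ### The maps `V`, `S`, `P`, `W` -/

variable {d : ℕ} (a : Fin d → ℝ)

noncomputable def Vmap (x : Fin d → WithTop ℝ) : Fin d → ℝ :=
  fun i => tropE (a i)⁻¹ (x i)

noncomputable def Smap (x : Fin d → WithTop ℝ) : ℝ := ∑ i, Vmap a x i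

noncomputable def Pmap (x : Fin d → WithTop ℝ) : Fin d → ℝ :=
  fun i => Vmap a x i / Smap a x

noncomputable def Wmap (x : Fin d → WithTop ℝ) : EuclideanSpace ℝ (Fin d) :=
  (WithLp.equiv 2 _).symm (fun i => Pmap a x i - (d:ℝ)⁻¹)

lemma Wmap_apply (x : Fin d → WithTop ℝ) (i : Fin d) :
    Wmap a x i = Pmap a x i - (d:ℝ)⁻¹ := rfl

variable {a}

lemma Vmap_nonneg (x : Fin d → WithTop ℝ) (i : Fin d) : 0 ≤ Vmap a x i :=
  tropE_nonneg _ _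

lemma Vmap_eq_zero_iff (x : Fin d → WithTop ℝ) (i : Fin d) :
    Vmap a x i = 0 ↔ x i = ⊤ := tropE_eq_zero_iff _ _

lemma exists_ne_top {x : Fin d → WithTop ℝ} (hx1 : x ≠ fun _ => ⊤) : ∃ i, x i ≠ ⊤ := by
  by_contra h
  push_neg at h
  exact hx1 (funext h)

lemma Smap_pos {x : Fin d → WithTop ℝ} (hx1 : x ≠ fun _ => ⊤) : 0 < Smap a x := by
  obtain ⟨i, hi⟩ := exists_ne_top hx1
  exact Finset.sum_pos' (fun j _ => Vmap_nonneg x j)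
    ⟨i, Finset.mem_univ i, tropE_pos _ hi⟩

lemma Pmap_nonneg {x : Fin d → WithTop ℝ} (hx1 : x ≠ fun _ => ⊤) (i : Fin d) :
    0 ≤ Pmap a x i :=
  div_nonneg (Vmap_nonneg x i) (Smap_pos hx1).le

lemma Pmap_sum {x : Fin d → WithTop ℝ} (hx1 : x ≠ fun _ => ⊤) :
    ∑ i, Pmap a x i = 1 := by
  rw [show ∑ i, Pmap a x i = (∑ i, Vmap a x i) / Smap a x from (Finset.sum_div _ _ _).symm]
  exact div_self (Smap_pos hx1).ne'

lemma Vmap_eq_P_mul_S {x : Fin d → WithTop ℝ} (hx1 : x ≠ fun _ => ⊤) (i : Fin d) :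
    Vmap a x i = Pmap a x i * Smap a x :=
  (div_mul_cancel₀ _ (Smap_pos hx1).ne').symm

lemma Wmap_mem (hd : 0 < d) {x : Fin d → WithTop ℝ} (hx1 : x ≠ fun _ => ⊤) :
    Wmap a x ∈ LinearMap.ker (sumL d) := by
  haveI : Nonempty (Fin d) := ⟨⟨0, hd⟩⟩
  have hd' : (d : ℝ) ≠ 0 := Nat.cast_ne_zero.2 hd.ne'
  rw [LinearMap.mem_ker, sumL_apply]
  have h : ∀ i : Fin d, Wmap a x i = Pmap a x i - (d:ℝ)⁻¹ := Wmap_apply a x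
  rw [Finset.sum_congr rfl (fun i _ => h i), Finset.sum_sub_distrib, Pmap_sum hx1,
    Finset.sum_const, Finset.card_univ, Fintype.card_fin, nsmul_eq_mul]
  field_simp
  simp

lemma Wmap_norm_pos (hd : 0 < d) {x : Fin d → WithTop ℝ} (hx2 : ∃ i, x i = ⊤) :
    0 < ‖Wmap a x‖ := by
  have hd' : (d : ℝ) ≠ 0 := Nat.cast_ne_zero.2 hd.ne'
  obtain ⟨i, hi⟩ := hx2
  have hP : Pmap a x i = 0 := by
    simp [Pmap, (Vmap_eq_zero_iff x i).2 hi]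
  rw [norm_pos_iff]
  intro h0
  have := congrArg (fun v : EuclideanSpace ℝ (Fin d) => v i) h0
  simp only [Wmap_apply, hP, zero_sub] at this
  have hz : (0 : EuclideanSpace ℝ (Fin d)) i = 0 := rfl
  rw [hz] at this
  exact (inv_ne_zero hd') (by linarith [neg_eq_zero.1 this])

lemma Vmap_translate (ha : ∀ k, 0 < a k) {x y : Fin d → WithTop ℝ} (n : ℤ)
    (hxy : ∀ k, y k = x k + (((n : ℝ) * a k : ℝ) : WithTop ℝ)) (i : Fin d) :
    Vmap a y i = Real.exp (-(n:ℝ)) * Vmap a x i := by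
  have := tropE_add (a i)⁻¹ (x i) ((n : ℝ) * a i)
  rw [Vmap, hxy i, this]
  congr 2
  field_simp [(ha i).ne']

lemma Smap_translate (ha : ∀ k, 0 < a k) {x y : Fin d → WithTop ℝ} (n : ℤ)
    (hxy : ∀ k, y k = x k + (((n : ℝ) * a k : ℝ) : WithTop ℝ)) :
    Smap a y = Real.exp (-(n:ℝ)) * Smap a x := by
  rw [Smap, Smap, Finset.mul_sum]
  exact Finset.sum_congr rfl (fun i _ => Vmap_translate ha n hxy i)

lemma continuous_Vmap (ha : ∀ k, 0 < a k) : Continuous (Vmap a) :=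
  continuous_pi fun i => (tropE_continuous (inv_pos.2 (ha i))).comp (continuous_apply i)

lemma continuous_Smap (ha : ∀ k, 0 < a k) : Continuous (Smap a) :=
  continuous_finset_sum _ fun i _ => (continuous_apply i).comp (continuous_Vmap ha)

/-! ### The point on the sphere and circle -/

noncomputable def sphPt (hd : 0 < d) (x : Fin d → WithTop ℝ)
    (hx : (x ≠ fun _ => ⊤) ∧ ∃ i, x i = ⊤) :
    Metric.sphere (0 : EuclideanSpace ℝ (Fin (d - 1))) 1 :=
  ⟨hplaneIso d hd (‖Wmap a x‖⁻¹ • (⟨Wmap a x, Wmap_mem hd hx.1⟩ : LinearMap.ker (sumL d))), by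
    have hpos := Wmap_norm_pos (a := a) hd hx.2
    have hnrm : ‖(⟨Wmap a x, Wmap_mem hd hx.1⟩ : LinearMap.ker (sumL d))‖ = ‖Wmap a x‖ := rfl
    rw [mem_sphere_zero_iff_norm, LinearIsometryEquiv.norm_map, norm_smul, hnrm,
      norm_inv, norm_norm, inv_mul_cancel₀ hpos.ne']⟩

noncomputable def circPt (x : Fin d → WithTop ℝ) : Circle :=
  Circle.exp (2 * Real.pi * Real.log (Smap a x))

end TropAux


open TropAux Set Real

/-- For `d ≥ 2` and a vector `a ∈ ℝ^d` with strictly positive coordinates,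
let `B` be the boundary of `𝕋^d ∖ {∞}`, i.e. the set of points `x ≠ ∞` having at least one
coordinate equal to `∞`; `B` is invariant under translation by `a`. Then the quotient `B/ℤ`
by the action `n·x = x + n·a` — the boundary `∂S` of the diagonal tropical Hopf manifold — is
homeomorphic to `S¹ × S^{d−2}`, the product of the circle with the `(d−2)`-dimensional sphere
(the unit sphere of `ℝ^{d−1}`). -/
theorem diagonal_hopf_boundary_homeo_circle_sphere {d : ℕ} (hd : 2 ≤ d)
    (a : Fin d → ℝ) (ha : ∀ k, 0 < a k)
    (B : Set (Fin d → WithTop ℝ))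
    (hB : B = {x | (x ≠ fun _ => ⊤) ∧ ∃ i, x i = ⊤})
    (r : Setoid B)
    (hr : ∀ x y : B, r.r x y ↔ ∃ n : ℤ, ∀ k,
      (y : Fin d → WithTop ℝ) k = (x : Fin d → WithTop ℝ) k + (((n : ℝ) * a k : ℝ) : WithTop ℝ)) :
    Nonempty (Quotient r ≃ₜ
      Circle × (Metric.sphere (0 : EuclideanSpace ℝ (Fin (d - 1))) 1)) := by
  classical
  have hd0 : 0 < d := by omega
  haveI : Nonempty (Fin d) := ⟨⟨0, hd0⟩⟩
  have hdR : (0:ℝ) < (d:ℝ) := by exact_mod_cast hd0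
  have hmem : ∀ x : B, ((x : Fin d → WithTop ℝ) ≠ fun _ => ⊤) ∧
      ∃ i, (x : Fin d → WithTop ℝ) i = ⊤ := by
    intro x
    exact hB.subset x.2
  set Ψ : B → Circle × (Metric.sphere (0 : EuclideanSpace ℝ (Fin (d - 1))) 1) :=
    fun x => (circPt (a := a) ↑x, sphPt (a := a) hd0 ↑x (hmem x)) with hΨ
  -- ### compatibility with the relation
  have hsphP : ∀ (x y : B), Pmap a (↑x) = Pmap a (↑y) →
      sphPt (a := a) hd0 ↑x (hmem x) = sphPt (a := a) hd0 ↑y (hmem y) := by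
    intro x y hP
    have hW : Wmap a (↑x) = Wmap a (↑y) := by unfold Wmap; rw [hP]
    apply Subtype.ext
    show hplaneIso d hd0 _ = hplaneIso d hd0 _
    apply congrArg
    apply Subtype.ext
    show ‖Wmap a (↑x : Fin d → WithTop ℝ)‖⁻¹ • Wmap a ↑x
      = ‖Wmap a (↑y : Fin d → WithTop ℝ)‖⁻¹ • Wmap a ↑y
    rw [hW]
  have hcompat : ∀ (x y : B), r.r x y → Ψ x = Ψ y := by
    intro x y hxy
    obtain ⟨n, hn⟩ := (hr x y).1 hxy
    have hV := Vmap_translate ha n hn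
    have hSy : Smap a ↑y = Real.exp (-(n:ℝ)) * Smap a ↑x := Smap_translate ha n hn
    have hSx := Smap_pos (a := a) (hmem x).1
    have hP : Pmap a (↑x : Fin d → WithTop ℝ) = Pmap a ↑y := by
      funext i
      rw [Pmap, Pmap, hV i, hSy, mul_div_mul_left _ _ (Real.exp_ne_zero _)]
    have hcirc : circPt (a := a) (↑x : Fin d → WithTop ℝ) = circPt (a := a) ↑y := by
      rw [circPt, circPt, hSy, Real.log_mul (Real.exp_ne_zero _) hSx.ne', Real.log_exp]
      exact (Circle.exp_eq_exp.2 ⟨-n, by push_cast; ring⟩).symm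
    simp only [hΨ]
    exact Prod.ext hcirc (hsphP x y hP)
  -- ### the induced map on the quotient
  set F : Quotient r → Circle × (Metric.sphere (0 : EuclideanSpace ℝ (Fin (d - 1))) 1) :=
    Quotient.lift Ψ hcompat with hF
  -- ### injectivity
  have hinj : Function.Injective F := by
    intro q1 q2
    refine Quotient.inductionOn₂ q1 q2 ?_
    intro x y h
    have hΨeq : Ψ x = Ψ y := h
    obtain ⟨hcirc, hsph⟩ := Prod.ext_iff.1 hΨeq
    apply Quotient.sound
    have hWx := Wmap_norm_pos (a := a) hd0 (hmem x).2
    have hWy := Wmap_norm_pos (a := a) hd0 (hmem y).2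
    have hSx := Smap_pos (a := a) (hmem x).1
    have hSy := Smap_pos (a := a) (hmem y).1
    have hval : (‖Wmap a (↑x : Fin d → WithTop ℝ)‖⁻¹ • Wmap a ↑x : EuclideanSpace ℝ (Fin d))
        = ‖Wmap a (↑y : Fin d → WithTop ℝ)‖⁻¹ • Wmap a ↑y := by
      have h1 := Subtype.ext_iff.1 hsph
      have h2 := (hplaneIso d hd0).injective h1
      exact Subtype.ext_iff.1 h2
    have hco : ∀ i, ‖Wmap a (↑x : Fin d → WithTop ℝ)‖⁻¹ * (Pmap a ↑x i - (d:ℝ)⁻¹)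
        = ‖Wmap a (↑y : Fin d → WithTop ℝ)‖⁻¹ * (Pmap a ↑y i - (d:ℝ)⁻¹) := by
      intro i
      have h3 := congrArg (fun v : EuclideanSpace ℝ (Fin d) => v i) hval
      simpa [PiLp.smul_apply, Wmap_apply, smul_eq_mul] using h3
    set α := ‖Wmap a (↑x : Fin d → WithTop ℝ)‖ with hα
    set β := ‖Wmap a (↑y : Fin d → WithTop ℝ)‖ with hβ
    set t := β / α with ht
    have htpos : 0 < t := div_pos hWy hWx
    have hco' : ∀ i, Pmap a (↑y : Fin d → WithTop ℝ) i - (d:ℝ)⁻¹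
        = t * (Pmap a (↑x : Fin d → WithTop ℝ) i - (d:ℝ)⁻¹) := by
      intro i
      have h4 := hco i
      rw [ht, div_mul_eq_mul_div, eq_div_iff hWx.ne']
      rw [inv_mul_eq_div, inv_mul_eq_div, div_eq_div_iff hWx.ne' hWy.ne'] at h4
      linarith [h4]
    have hdinv : 0 < (d:ℝ)⁻¹ := inv_pos.2 hdR
    obtain ⟨j, hj⟩ := (hmem x).2
    have hPxj : Pmap a (↑x : Fin d → WithTop ℝ) j = 0 := by
      simp [Pmap, (Vmap_eq_zero_iff _ j).2 hj]
    have ht1 : t ≤ 1 := by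
      have h5 := hco' j
      rw [hPxj] at h5
      have hPy := Pmap_nonneg (a := a) (hmem y).1 j
      nlinarith
    obtain ⟨j', hj'⟩ := (hmem y).2
    have hPyj : Pmap a (↑y : Fin d → WithTop ℝ) j' = 0 := by
      simp [Pmap, (Vmap_eq_zero_iff _ j').2 hj']
    have ht2 : 1 ≤ t := by
      have h5 := hco' j'
      rw [hPyj] at h5
      have hPx := Pmap_nonneg (a := a) (hmem x).1 j'
      nlinarith
    have hteq : t = 1 := le_antisymm ht1 ht2
    have hPeq : Pmap a (↑x : Fin d → WithTop ℝ) = Pmap a ↑y := by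
      funext i
      have h5 := hco' i
      rw [hteq, one_mul] at h5
      linarith
    obtain ⟨m, hm⟩ := Circle.exp_eq_exp.1 hcirc
    have hπ : (2:ℝ) * Real.pi ≠ 0 := by positivity
    have hlog : Real.log (Smap a ↑x) = Real.log (Smap a ↑y) + m := by
      have h6 : (2 * Real.pi) * Real.log (Smap a ↑x)
          = (2 * Real.pi) * (Real.log (Smap a ↑y) + m) := by
        rw [hm]; ring
      exact mul_left_cancel₀ hπ h6
    have hSxy : Smap a (↑x : Fin d → WithTop ℝ) = Real.exp ((m:ℝ)) * Smap a ↑y := by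
      have h7 : Smap a (↑x : Fin d → WithTop ℝ) = Real.exp (Real.log (Smap a ↑y) + m) := by
        rw [← hlog, Real.exp_log hSx]
      rw [h7, Real.exp_add, Real.exp_log hSy]; ring
    refine (hr x y).2 ⟨m, fun k => ?_⟩
    have hVy : Vmap a (↑y : Fin d → WithTop ℝ) k = Real.exp (-(m:ℝ)) * Vmap a ↑x k := by
      rw [Vmap_eq_P_mul_S (a := a) (hmem y).1 k, Vmap_eq_P_mul_S (a := a) (hmem x).1 k,
        hPeq, hSxy, Real.exp_neg]
      field_simp
    have h8 := Vmap_translate (x := (↑x : Fin d → WithTop ℝ))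
      (y := fun k => (↑x : Fin d → WithTop ℝ) k + (((m:ℝ) * a k : ℝ) : WithTop ℝ))
      ha m (fun k => rfl) k
    have hVeq : Vmap a (↑y : Fin d → WithTop ℝ) k
        = Vmap a (fun k => (↑x : Fin d → WithTop ℝ) k + (((m:ℝ) * a k : ℝ) : WithTop ℝ)) k := by
      rw [hVy, h8]
    exact tropE_injective (inv_pos.2 (ha k)) hVeq
  -- ### surjectivity
  have hsurj : Function.Surjective F := by
    rintro ⟨z, q⟩
    set w0 : LinearMap.ker (sumL d) := (hplaneIso d hd0).symm q with hw0
    have hw0norm : ‖(w0 : EuclideanSpace ℝ (Fin d))‖ = 1 := by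
      have h1 : ‖w0‖ = ‖(q : EuclideanSpace ℝ (Fin (d-1)))‖ := by
        rw [hw0, LinearIsometryEquiv.norm_map]
      rw [show ‖(w0 : EuclideanSpace ℝ (Fin d))‖ = ‖w0‖ from rfl, h1,
        mem_sphere_zero_iff_norm.1 q.2]
    have hw0sum : ∑ i, (w0 : EuclideanSpace ℝ (Fin d)) i = 0 := w0.2
    obtain ⟨j0, -, hj0⟩ := Finset.exists_min_image Finset.univ
      (fun i => (w0 : EuclideanSpace ℝ (Fin d)) i) Finset.univ_nonempty
    set μ := (w0 : EuclideanSpace ℝ (Fin d)) j0 with hμ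
    have hμneg : μ < 0 := by
      by_contra hc
      push_neg at hc
      have hall : ∀ i ∈ Finset.univ, (0:ℝ) ≤ (w0 : EuclideanSpace ℝ (Fin d)) i :=
        fun i _ => le_trans hc (hj0 i (Finset.mem_univ i))
      have hzero : ∀ i ∈ Finset.univ, (w0 : EuclideanSpace ℝ (Fin d)) i = 0 :=
        (Finset.sum_eq_zero_iff_of_nonneg hall).1 hw0sum
      have hz : (w0 : EuclideanSpace ℝ (Fin d)) = 0 := PiLp.ext fun i => hzero i (Finset.mem_univ i)
      rw [hz] at hw0norm
      simp at hw0norm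
    have hμne : -μ ≠ 0 := (neg_pos.2 hμneg).ne'
    set t : ℝ := ((d:ℝ) * (-μ))⁻¹ with htdef
    have htpos : 0 < t := inv_pos.2 (mul_pos hdR (neg_pos.2 hμneg))
    have htμ : t * μ = -(d:ℝ)⁻¹ :=
      calc t * μ = (d:ℝ)⁻¹ * ((-μ)⁻¹ * μ) := by rw [htdef, mul_inv]; ring
      _ = -(d:ℝ)⁻¹ := by
          rw [show (-μ)⁻¹ * μ = -((-μ)⁻¹ * -μ) by ring, inv_mul_cancel₀ hμne]; ring
    set p : Fin d → ℝ := fun i => (d:ℝ)⁻¹ + t * (w0 : EuclideanSpace ℝ (Fin d)) i with hp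
    have hpnonneg : ∀ i, 0 ≤ p i := by
      intro i
      have h2 : t * μ ≤ t * (w0 : EuclideanSpace ℝ (Fin d)) i :=
        mul_le_mul_of_nonneg_left (hj0 i (Finset.mem_univ i)) htpos.le
      rw [htμ] at h2
      simp only [hp]
      linarith
    have hpj0 : p j0 = 0 := by
      simp only [hp, ← hμ]
      rw [htμ]
      ring
    have hpsum : ∑ i, p i = 1 := by
      simp only [hp]
      rw [Finset.sum_add_distrib, ← Finset.mul_sum, hw0sum, Finset.sum_const,
        Finset.card_univ, Fintype.card_fin, nsmul_eq_mul, mul_zero, add_zero]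
      field_simp
    set θ : ℝ := Complex.arg (z : ℂ) with hθdef
    have hθ : Circle.exp θ = z := Circle.exp_arg z
    set s0 : ℝ := Real.exp (θ / (2 * Real.pi)) with hs0
    have hs0pos : 0 < s0 := Real.exp_pos _
    set v : Fin d → ℝ := fun i => s0 * p i with hv
    set x0 : Fin d → WithTop ℝ := fun k =>
      if v k = 0 then ⊤ else (((-(a k)) * Real.log (v k) : ℝ) : WithTop ℝ) with hx0
    have hVx0 : ∀ k, Vmap a x0 k = v k := by
      intro k
      by_cases hk : v k = 0
      · simp only [Vmap, hx0]
        rw [if_pos hk, tropE_top, hk]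
      · have hvpos : 0 < v k :=
          lt_of_le_of_ne (mul_nonneg hs0pos.le (hpnonneg k)) (Ne.symm hk)
        simp only [Vmap, hx0]
        rw [if_neg hk, tropE_coe]
        rw [show -((a k)⁻¹ * (-(a k) * Real.log (v k))) = Real.log (v k) by
          field_simp
          exact mul_div_cancel_left₀ _ (ha k).ne']
        exact Real.exp_log hvpos
    have hx0mem : x0 ∈ B := by
      rw [hB]
      constructor
      · have hex : ∃ k, p k ≠ 0 := by
          by_contra hcon
          push_neg at hcon
          have h3 : (1:ℝ) = 0 := by
            rw [← hpsum]
            exact Finset.sum_eq_zero fun i _ => hcon i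
          norm_num at h3
        obtain ⟨k, hk⟩ := hex
        have hvk : v k ≠ 0 := mul_ne_zero hs0pos.ne' hk
        intro hcon
        have h4 := congrFun hcon k
        simp only [hx0] at h4
        rw [if_neg hvk] at h4
        exact WithTop.coe_ne_top h4
      · refine ⟨j0, ?_⟩
        simp only [hx0]
        rw [if_pos]
        simp [hv, hpj0]
    have hSx0 : Smap a x0 = s0 := by
      rw [Smap, Finset.sum_congr rfl (fun i _ => hVx0 i)]
      simp only [hv]
      rw [← Finset.mul_sum, hpsum, mul_one]
    have hPx0 : ∀ i, Pmap a x0 i = p i := by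
      intro i
      rw [Pmap, hVx0 i, hSx0, hv]
      exact mul_div_cancel_left₀ _ hs0pos.ne'
    refine ⟨Quotient.mk r ⟨x0, hx0mem⟩, ?_⟩
    have hFval : F (Quotient.mk r ⟨x0, hx0mem⟩) = Ψ ⟨x0, hx0mem⟩ := rfl
    rw [hFval]
    have hcircval : circPt (a := a) x0 = z := by
      rw [circPt, hSx0, hs0, Real.log_exp]
      rw [show 2 * Real.pi * (θ / (2 * Real.pi)) = θ by
        field_simp]
      exact hθ
    have hWx0 : Wmap a x0 = t • (w0 : EuclideanSpace ℝ (Fin d)) := by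
      ext i
      rw [Wmap_apply, hPx0 i]
      show (d:ℝ)⁻¹ + t * (w0 : EuclideanSpace ℝ (Fin d)) i - (d:ℝ)⁻¹
        = (t • (w0 : EuclideanSpace ℝ (Fin d))) i
      rw [PiLp.smul_apply, smul_eq_mul]
      ring
    have hsphval : sphPt (a := a) hd0 x0 (hmem ⟨x0, hx0mem⟩) = q := by
      apply Subtype.ext
      show hplaneIso d hd0 (‖Wmap a x0‖⁻¹ • ⟨Wmap a x0, _⟩) = (q : EuclideanSpace ℝ (Fin (d-1)))
      have hWnorm : ‖Wmap a x0‖ = t := by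
        rw [hWx0, norm_smul, hw0norm, mul_one, Real.norm_eq_abs, abs_of_pos htpos]
      have hker : (⟨Wmap a x0, Wmap_mem hd0 (hmem ⟨x0, hx0mem⟩).1⟩ : LinearMap.ker (sumL d))
          = t • w0 := by
        apply Subtype.ext
        show Wmap a x0 = ((t • w0 : LinearMap.ker (sumL d)) : EuclideanSpace ℝ (Fin d))
        rw [Submodule.coe_smul]
        exact hWx0
      rw [hker, hWnorm, smul_smul, inv_mul_cancel₀ htpos.ne', one_smul, hw0,
        LinearIsometryEquiv.apply_symm_apply]
    simp only [hΨ]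
    exact Prod.ext hcircval hsphval
  -- ### continuity of F
  have hScont : Continuous fun x : B => Smap a (↑x : Fin d → WithTop ℝ) :=
    (continuous_Smap ha).comp continuous_subtype_val
  have hSpos : ∀ x : B, 0 < Smap a (↑x : Fin d → WithTop ℝ) :=
    fun x => Smap_pos (a := a) (hmem x).1
  have hlogcont : Continuous fun x : B => Real.log (Smap a (↑x : Fin d → WithTop ℝ)) := by
    apply Real.continuousOn_log.comp_continuous hScont
    intro x
    exact mem_compl_singleton_iff.2 (hSpos x).ne'
  have hcirccont : Continuous fun x : B => circPt (a := a) (↑x : Fin d → WithTop ℝ) :=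
    Circle.exp.continuous.comp (continuous_const.mul hlogcont)
  have hVcont : Continuous fun x : B => Vmap a (↑x : Fin d → WithTop ℝ) :=
    (continuous_Vmap ha).comp continuous_subtype_val
  have hPcont : Continuous fun x : B => Pmap a (↑x : Fin d → WithTop ℝ) := by
    apply continuous_pi
    intro i
    exact ((continuous_apply i).comp hVcont).div hScont fun x => (hSpos x).ne'
  have hWcont : Continuous fun x : B => Wmap a (↑x : Fin d → WithTop ℝ) := by
    apply (PiLp.continuous_toLp 2 (fun _ : Fin d => ℝ)).comp
    exact continuous_pi fun i => ((continuous_apply i).comp hPcont).sub continuous_const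
  have hsphcont : Continuous fun x : B => sphPt (a := a) hd0 ↑x (hmem x) := by
    apply Continuous.subtype_mk
    apply (hplaneIso d hd0).continuous.comp
    apply Continuous.fun_smul
    · exact hWcont.norm.inv₀ fun x => (Wmap_norm_pos (a := a) hd0 (hmem x).2).ne'
    · exact hWcont.subtype_mk _
  have hΨcont : Continuous Ψ := hcirccont.prodMk hsphcont
  have hFcont : Continuous F := hΨcont.quotient_lift hcompat
  -- ### compactness of the quotient
  have hDclosed : IsClosed {x : Fin d → WithTop ℝ |
      (∃ i, x i = ⊤) ∧ Smap a x ∈ Icc (1:ℝ) (Real.exp 1)} := by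
    have hc1 : IsClosed {x : Fin d → WithTop ℝ | ∃ i, x i = ⊤} := by
      have h1 : {x : Fin d → WithTop ℝ | ∃ i, x i = ⊤}
          = ⋃ i, {x : Fin d → WithTop ℝ | x i = ⊤} := by
        ext x; simp
      rw [h1]
      apply isClosed_iUnion_of_finite
      intro i
      have h2 : {x : Fin d → WithTop ℝ | x i = ⊤}
          = (fun x : Fin d → WithTop ℝ => x i) ⁻¹' Ici (⊤ : WithTop ℝ) := by
        ext x; simp [top_le_iff]
      rw [h2]
      exact isClosed_Ici.preimage (continuous_apply i)
    have hc2 : IsClosed {x : Fin d → WithTop ℝ | Smap a x ∈ Icc (1:ℝ) (Real.exp 1)} :=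
      isClosed_Icc.preimage (continuous_Smap ha)
    exact hc1.inter hc2
  have hDsub : {x : Fin d → WithTop ℝ |
      (∃ i, x i = ⊤) ∧ Smap a x ∈ Icc (1:ℝ) (Real.exp 1)}
      ⊆ Set.pi Set.univ (fun i => Ici ((-(a i) : ℝ) : WithTop ℝ)) := by
    rintro x ⟨-, h1, h2⟩ k -
    rcases eq_or_ne (x k) ⊤ with hxk | hxk
    · rw [mem_Ici, hxk]; exact le_top
    · obtain ⟨tk, htk⟩ := WithTop.ne_top_iff_exists.1 hxk
      have hVk : Vmap a x k ≤ Smap a x :=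
        Finset.single_le_sum (fun i _ => Vmap_nonneg x i) (Finset.mem_univ k)
      have hVkval : Vmap a x k = Real.exp (-((a k)⁻¹ * tk)) := by rw [Vmap, ← htk, tropE_coe]
      have hle : Real.exp (-((a k)⁻¹ * tk)) ≤ Real.exp 1 := by linarith
      have h3 : -((a k)⁻¹ * tk) ≤ 1 := Real.exp_le_exp.1 hle
      have h4 : -(a k) ≤ tk := by
        have h5 := mul_le_mul_of_nonneg_left h3 (ha k).le
        rw [mul_one] at h5
        have h6 : a k * -((a k)⁻¹ * tk) = -tk := by
          rw [mul_neg, ← mul_assoc, mul_inv_cancel₀ (ha k).ne', one_mul]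
        rw [h6] at h5
        linarith
      rw [mem_Ici, ← htk]
      exact WithTop.coe_le_coe.2 h4
  have hDcomp : IsCompact {x : Fin d → WithTop ℝ |
      (∃ i, x i = ⊤) ∧ Smap a x ∈ Icc (1:ℝ) (Real.exp 1)} :=
    IsCompact.of_isClosed_subset
      (isCompact_univ_pi fun i => isCompact_Ici_trop (-(a i))) hDclosed hDsub
  have hDB : {x : Fin d → WithTop ℝ |
      (∃ i, x i = ⊤) ∧ Smap a x ∈ Icc (1:ℝ) (Real.exp 1)} ⊆ B := by
    rintro x ⟨hex, h1, -⟩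
    rw [hB]
    refine ⟨?_, hex⟩
    intro hcon
    have h5 : Smap a x = 0 := by
      rw [Smap]
      apply Finset.sum_eq_zero
      intro i _
      rw [Vmap_eq_zero_iff, hcon]
    linarith
  have hK'comp : IsCompact (Subtype.val ⁻¹' {x : Fin d → WithTop ℝ |
      (∃ i, x i = ⊤) ∧ Smap a x ∈ Icc (1:ℝ) (Real.exp 1)} : Set B) := by
    rw [Subtype.isCompact_iff, Subtype.image_preimage_coe,
      inter_eq_self_of_subset_right hDB]
    exact hDcomp
  have hmkcont : Continuous (Quotient.mk r : B → Quotient r) := continuous_quotient_mk'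
  have hQcomp : CompactSpace (Quotient r) := by
    constructor
    have himg : Quotient.mk r '' (Subtype.val ⁻¹' {x : Fin d → WithTop ℝ |
        (∃ i, x i = ⊤) ∧ Smap a x ∈ Icc (1:ℝ) (Real.exp 1)} : Set B) = univ := by
      rw [eq_univ_iff_forall]
      intro q
      refine Quotient.inductionOn q ?_
      intro x
      set n : ℤ := ⌊Real.log (Smap a (↑x : Fin d → WithTop ℝ))⌋ with hn
      set y : Fin d → WithTop ℝ :=
        fun k => (↑x : Fin d → WithTop ℝ) k + (((n:ℝ) * a k : ℝ) : WithTop ℝ) with hy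
      have hSx := Smap_pos (a := a) (hmem x).1
      have hyB : y ∈ B := by
        rw [hB]
        constructor
        · obtain ⟨k, hk⟩ := exists_ne_top (hmem x).1
          obtain ⟨tk, htk⟩ := WithTop.ne_top_iff_exists.1 hk
          intro hcon
          have h6 := congrFun hcon k
          simp only [hy] at h6
          rw [← htk, ← WithTop.coe_add] at h6
          exact WithTop.coe_ne_top h6
        · obtain ⟨i, hi⟩ := (hmem x).2
          refine ⟨i, ?_⟩
          simp only [hy]
          rw [hi, top_add]
      have hSy : Smap a y = Real.exp (-(n:ℝ)) * Smap a ↑x :=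
        Smap_translate ha n (fun k => rfl)
      have h7 : Int.fract (Real.log (Smap a (↑x : Fin d → WithTop ℝ)))
          = Real.log (Smap a (↑x : Fin d → WithTop ℝ)) - (n:ℝ) := by
        rw [hn]
        exact (Int.self_sub_floor _).symm
      have hfr : Smap a y = Real.exp (Int.fract (Real.log (Smap a ↑x))) := by
        rw [h7, Real.exp_sub, Real.exp_log hSx, hSy, Real.exp_neg]
        ring
      have hybound : Smap a y ∈ Icc (1:ℝ) (Real.exp 1) := by
        rw [hfr]
        constructor
        · rw [show (1:ℝ) = Real.exp 0 from Real.exp_zero.symm]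
          exact Real.exp_le_exp.2 (Int.fract_nonneg _)
        · exact (Real.exp_lt_exp.2 (Int.fract_lt_one _)).le
      refine ⟨⟨y, hyB⟩, ⟨(hB.subset hyB).2, hybound⟩, ?_⟩
      · apply Quotient.sound
        exact Setoid.symm ((hr x ⟨y, hyB⟩).2 ⟨n, fun k => rfl⟩)
    rw [← himg]
    exact hK'comp.image hmkcont
  -- ### conclusion
  let eqv : Quotient r ≃ Circle × (Metric.sphere (0 : EuclideanSpace ℝ (Fin (d - 1))) 1) :=
    Equiv.ofBijective F ⟨hinj, hsurj⟩
  have heqvcont : Continuous ⇑eqv := hFcont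
  exact ⟨heqvcont.homeoOfEquivCompactToT2⟩
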